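/- Let A = (3) (the 1×1 matrix acting on ℝ by multiplication by 3) and D = {0, 1, 5, 6} ⊂ ℤ. Then the self-affine set T = {Σ_{k≥1} 3^{-k} d_k : d_k ∈ D} equals [0, 4/3] ∪ [5/3, 3], and its Lebesgue measure is 8/3. -/

import Mathlib

open MeasureTheory

noncomputable def dig15 (y : ℝ) : ℤ :=
  if 3*y ≤ 4/3 then 0 else if 3*y ≤ 7/3 then 1 else if 3*y ≤ 3 then 0
  else if 3*y ≤ 4 then 1 else if 3*y ≤ 19/3 then 5 else if 3*y ≤ 22/3 then 6
  else if 3*y ≤ 8 then 5 else 6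

lemma dig15_mem (y : ℝ) : dig15 y ∈ ({0,1,5,6} : Set ℤ) := by
  unfold dig15; split_ifs <;> simp

lemma dig15_step {y : ℝ} (hy : y ∈ Set.Icc (0:ℝ) (4/3) ∪ Set.Icc (5/3) 3) :
    3*y - dig15 y ∈ Set.Icc (0:ℝ) (4/3) ∪ Set.Icc (5/3) 3 := by
  unfold dig15
  rcases hy with ⟨h1,h2⟩|⟨h1,h2⟩ <;> split_ifs with a b c d e f g <;>
    push_cast <;>
    first
      | (left; constructor <;> linarith)
      | (right; constructor <;> linarith)

noncomputable def yseq15 (x : ℝ) : ℕ → ℝ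
  | 0 => x
  | n+1 => 3 * yseq15 x n - dig15 (yseq15 x n)

lemma yseq15_mem {x : ℝ} (hx : x ∈ Set.Icc (0:ℝ) (4/3) ∪ Set.Icc (5/3) 3) (n : ℕ) :
    yseq15 x n ∈ Set.Icc (0:ℝ) (4/3) ∪ Set.Icc (5/3) 3 := by
  induction n with
  | zero => exact hx
  | succ n ih => exact dig15_step ih

lemma yseq15_sum (x : ℝ) (n : ℕ) :
    ∑ k ∈ Finset.range n, (dig15 (yseq15 x k) : ℝ) / 3^(k+1) = x - yseq15 x n / 3^n := by
  induction n with
  | zero => simp [yseq15]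
  | succ n ih =>
    rw [Finset.sum_range_succ, ih, yseq15]
    have h3 : (3:ℝ)^n ≠ 0 := by positivity
    field_simp
    ring

lemma set_eq15 :
    {x : ℝ | ∃ d : ℕ → ℤ, (∀ k, d k ∈ ({0, 1, 5, 6} : Set ℤ)) ∧
        HasSum (fun k => (d k : ℝ) / 3 ^ (k + 1)) x} =
      Set.Icc (0 : ℝ) (4 / 3) ∪ Set.Icc (5 / 3) 3 := by
  ext x
  constructor
  · rintro ⟨d, hd, hs⟩
    have hb : ∀ k, (0:ℝ) ≤ (d k : ℝ) ∧ (d k : ℝ) ≤ 6 := by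
      intro k
      have h := hd k
      simp only [Set.mem_insert_iff, Set.mem_singleton_iff] at h
      rcases h with h|h|h|h <;> rw [h] <;> norm_num
    have htail : HasSum (fun k => (d (k+1) : ℝ) / 3 ^ (k + 1 + 1))
        (x - ∑ i ∈ Finset.range 1, (d i : ℝ) / 3 ^ (i+1)) := by
      exact (hasSum_nat_add_iff' 1).mpr hs
    have hgeo : HasSum (fun k : ℕ => (2:ℝ)/3 * (1/3)^k) 1 := by
      have := (hasSum_geometric_of_lt_one (by norm_num : (0:ℝ) ≤ 1/3)
        (by norm_num : (1:ℝ)/3 < 1)).mul_left ((2:ℝ)/3)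
      have h2 : (2:ℝ)/3 * (1 - 1/3)⁻¹ = 1 := by norm_num
      rw [h2] at this; exact this
    have hle : ∀ k : ℕ, (d (k+1) : ℝ) / 3 ^ (k + 1 + 1) ≤ (2:ℝ)/3 * (1/3)^k := by
      intro k
      have h6 : (d (k+1) : ℝ) / 3 ^ (k + 1 + 1) ≤ 6 / 3 ^ (k+1+1) := by
        gcongr
        exact (hb (k+1)).2
      refine h6.trans_eq ?_
      rw [div_pow, one_pow, pow_succ, pow_succ]
      field_simp
      ring
    have hnn : ∀ k : ℕ, (0:ℝ) ≤ (d (k+1) : ℝ) / 3 ^ (k + 1 + 1) := by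
      intro k
      have := (hb (k+1)).1
      positivity
    have hub : x - ∑ i ∈ Finset.range 1, (d i : ℝ) / 3 ^ (i+1) ≤ 1 :=
      hasSum_le hle htail hgeo
    have hlb : 0 ≤ x - ∑ i ∈ Finset.range 1, (d i : ℝ) / 3 ^ (i+1) :=
      hasSum_le hnn hasSum_zero htail
    simp only [Finset.sum_range_one, pow_one] at hub hlb
    have h := hd 0
    simp only [Set.mem_insert_iff, Set.mem_singleton_iff] at h
    rcases h with h|h|h|h <;> rw [h] at hub hlb <;> push_cast at hub hlb
    · left; constructor <;> · linarith
    · left; constructor <;> · linarith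
    · right; constructor <;> · linarith
    · right; constructor <;> · linarith
  · intro hx
    refine ⟨fun k => dig15 (yseq15 x k), fun k => dig15_mem _, ?_⟩
    have hnn : ∀ k : ℕ, (0:ℝ) ≤ (dig15 (yseq15 x k) : ℝ) / 3 ^ (k + 1) := by
      intro k
      have h := dig15_mem (yseq15 x k)
      simp only [Set.mem_insert_iff, Set.mem_singleton_iff] at h
      have h0 : (0:ℝ) ≤ (dig15 (yseq15 x k) : ℝ) := by
        rcases h with h|h|h|h <;> rw [h] <;> norm_num
      positivity
    have hle : ∀ k : ℕ, (dig15 (yseq15 x k) : ℝ) / 3 ^ (k + 1) ≤ 2 * (1/3)^k := by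
      intro k
      have h := dig15_mem (yseq15 x k)
      simp only [Set.mem_insert_iff, Set.mem_singleton_iff] at h
      have h6 : (dig15 (yseq15 x k) : ℝ) ≤ 6 := by
        rcases h with h|h|h|h <;> rw [h] <;> norm_num
      have h' : (dig15 (yseq15 x k) : ℝ) / 3 ^ (k + 1) ≤ 6 / 3 ^ (k+1) := by
        gcongr
      refine h'.trans_eq ?_
      rw [div_pow, one_pow, pow_succ]
      field_simp; ring
    have hsummable : Summable (fun k => (dig15 (yseq15 x k) : ℝ) / 3 ^ (k + 1)) := by
      refine Summable.of_nonneg_of_le hnn hle ?_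
      exact (summable_geometric_of_lt_one (by norm_num) (by norm_num)).mul_left 2
    have htend : Filter.Tendsto (fun n => ∑ k ∈ Finset.range n,
        (dig15 (yseq15 x k) : ℝ) / 3 ^ (k + 1)) Filter.atTop (nhds x) := by
      have heq : ∀ n, ∑ k ∈ Finset.range n, (dig15 (yseq15 x k) : ℝ) / 3 ^ (k + 1)
          = x - yseq15 x n / 3 ^ n := yseq15_sum x
      simp only [heq]
      have h0 : Filter.Tendsto (fun n : ℕ => yseq15 x n / 3 ^ n) Filter.atTop (nhds 0) := by
        have hbd : ∀ n : ℕ, ‖yseq15 x n / 3 ^ n‖ ≤ 3 * (1/3)^n := by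
          intro n
          have hm := yseq15_mem hx n
          have h1 : 0 ≤ yseq15 x n := by
            rcases hm with ⟨h,_⟩|⟨h,_⟩ <;> linarith
          have h2 : yseq15 x n ≤ 3 := by
            rcases hm with ⟨_,h⟩|⟨_,h⟩ <;> linarith
          rw [Real.norm_eq_abs, abs_of_nonneg (by positivity),
            div_le_iff₀ (by positivity : (0:ℝ) < 3^n)]
          calc yseq15 x n ≤ 3 := h2
            _ ≤ 3 * (1/3)^n * 3^n := by
                rw [mul_assoc, div_pow, one_pow, one_div, inv_mul_cancel₀ (by positivity)]
                norm_num
        have hg : Filter.Tendsto (fun n : ℕ => 3 * (1/3:ℝ)^n) Filter.atTop (nhds 0) := by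
          have := tendsto_pow_atTop_nhds_zero_of_lt_one (by norm_num : (0:ℝ) ≤ 1/3)
            (by norm_num : (1:ℝ)/3 < 1)
          simpa using this.const_mul 3
        exact squeeze_zero_norm hbd hg
      simpa using Filter.Tendsto.const_sub x h0
    exact (hsummable.hasSum_iff_tendsto_nat).mpr htend

/-- for `A = (3)` and `D = {0,1,5,6}`, the self-affine set
`T = {Σ 3^{-k} d_k}` equals `[0, 4/3] ∪ [5/3, 3]` and has Lebesgue measure `8/3`. -/
theorem stmt15 :
    {x : ℝ | ∃ d : ℕ → ℤ, (∀ k, d k ∈ ({0, 1, 5, 6} : Set ℤ)) ∧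
        HasSum (fun k => (d k : ℝ) / 3 ^ (k + 1)) x} =
      Set.Icc (0 : ℝ) (4 / 3) ∪ Set.Icc (5 / 3) 3 ∧
    volume {x : ℝ | ∃ d : ℕ → ℤ, (∀ k, d k ∈ ({0, 1, 5, 6} : Set ℤ)) ∧
        HasSum (fun k => (d k : ℝ) / 3 ^ (k + 1)) x} = ENNReal.ofReal (8 / 3) := by
  refine ⟨set_eq15, ?_⟩
  rw [set_eq15]
  have hdisj : Disjoint (Set.Icc (0:ℝ) (4/3)) (Set.Icc (5/3) 3) := by
    apply Set.disjoint_left.mpr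
    rintro z ⟨_, h1⟩ ⟨h2, _⟩
    linarith
  rw [measure_union hdisj measurableSet_Icc, Real.volume_Icc, Real.volume_Icc,
    ← ENNReal.ofReal_add (by norm_num) (by norm_num)]
  norm_num
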